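/- Let E ⊆ X × Y be a binary relation between finite sets X and Y, and let d ≥ 1. If there exist a_0,...,a_{2^{d+1}-1} ∈ X and b_0,...,b_{2^{d+1}-1} ∈ Y forming a ladder of height 2^{d+1} for E (i.e., (a_i,b_j) ∈ E iff i ≤ j), then there exist elements (a_σ)_{σ ∈ 2^{d+1}} in X and (b_σ)_{σ ∈ 2^{<d+1}} in Y, all chosen among the given a_i and b_i respectively via injective index maps, forming a tree of height d+1 for E: for every σ ∈ 2^{d+1} and i < d+1, (a_σ, b_{σ|_i}) ∈ E iff σ(i) = 1. -/

import Mathlib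

open Set Finset

private lemma sum_bits_lt (c : ℕ → Bool) (n : ℕ) :
    (∑ j ∈ Finset.range n, (c j).toNat * 2 ^ j) < 2 ^ n := by
  induction n with
  | zero => simp
  | succ n ih =>
    rw [Finset.sum_range_succ, pow_succ]
    have h1 : (c n).toNat ≤ 1 := Bool.toNat_le _
    have h2 : (c n).toNat * 2 ^ n ≤ 1 * 2 ^ n := Nat.mul_le_mul_right _ h1
    omega

private lemma sum_two_pow (n : ℕ) :
    (∑ j ∈ Finset.range n, 2 ^ j) = 2 ^ n - 1 := by
  induction n with
  | zero => simp
  | succ n ih =>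
    rw [Finset.sum_range_succ, pow_succ, ih]
    have := Nat.one_le_two_pow (n := n)
    omega

private lemma sum_bits_inj (c c' : ℕ → Bool) : ∀ n,
    (∑ j ∈ Finset.range n, (c j).toNat * 2 ^ j)
      = (∑ j ∈ Finset.range n, (c' j).toNat * 2 ^ j) →
    ∀ j < n, c j = c' j := by
  intro n
  induction n with
  | zero => intro _ j hj; omega
  | succ n ih =>
    intro h j hj
    rw [Finset.sum_range_succ, Finset.sum_range_succ] at h
    have b1 := sum_bits_lt c n
    have b2 := sum_bits_lt c' n
    have t1 : (c n).toNat ≤ 1 := Bool.toNat_le _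
    have t2 : (c' n).toNat ≤ 1 := Bool.toNat_le _
    have hc : c n = c' n := by
      cases hcn : c n <;> cases hcn' : c' n
      · rfl
      · exfalso; rw [hcn, hcn'] at h; simp at h; omega
      · exfalso; rw [hcn, hcn'] at h; simp at h; omega
      · rfl
    rw [hc] at h
    have hlow : (∑ j ∈ Finset.range n, (c j).toNat * 2 ^ j)
        = (∑ j ∈ Finset.range n, (c' j).toNat * 2 ^ j) := by omega
    rcases Nat.lt_or_ge j n with hj' | hj'
    · exact ih hlow j hj'
    · have : j = n := by omega
      subst this
      exact hc

private lemma sum_bits_le_iff (c c' : ℕ → Bool) (d p : ℕ) (hp : p ≤ d)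
    (hhigh : ∀ j, p < j → j < d + 1 → c j = c' j)
    (hcp : c' p = false) (hlow : ∀ j < p, c' j = true) :
    ((∑ j ∈ Finset.range (d + 1), (c j).toNat * 2 ^ j)
      ≤ ∑ j ∈ Finset.range (d + 1), (c' j).toNat * 2 ^ j) ↔ c p = false := by
  have hsplit : ∀ cc : ℕ → Bool,
      (∑ j ∈ Finset.range (d + 1), (cc j).toNat * 2 ^ j)
        = (∑ j ∈ Finset.range p, (cc j).toNat * 2 ^ j) + (cc p).toNat * 2 ^ p
          + ∑ j ∈ Finset.Ico (p + 1) (d + 1), (cc j).toNat * 2 ^ j := by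
    intro cc
    rw [Finset.range_eq_Ico,
      ← Finset.sum_Ico_consecutive (fun j => (cc j).toNat * 2 ^ j)
        (Nat.zero_le (p + 1)) (by omega : p + 1 ≤ d + 1),
      ← Finset.range_eq_Ico, Finset.sum_range_succ]
  rw [hsplit c, hsplit c']
  have hHeq : (∑ j ∈ Finset.Ico (p + 1) (d + 1), (c j).toNat * 2 ^ j)
      = ∑ j ∈ Finset.Ico (p + 1) (d + 1), (c' j).toNat * 2 ^ j := by
    apply Finset.sum_congr rfl
    intro j hj
    rw [Finset.mem_Ico] at hj
    rw [hhigh j (by omega) (by omega)]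
  have hLow' : (∑ j ∈ Finset.range p, (c' j).toNat * 2 ^ j) = 2 ^ p - 1 := by
    rw [← sum_two_pow p]
    apply Finset.sum_congr rfl
    intro j hj
    rw [Finset.mem_range] at hj
    rw [hlow j hj]
    simp
  have hLowc := sum_bits_lt c p
  have hpow : (1:ℕ) ≤ 2 ^ p := Nat.one_le_two_pow
  rw [hHeq, hLow', hcp]
  cases hcp' : c p <;> simp <;> omega

/-- If a finite bipartite relation contains a ladder of height `2^(d+1)`, then it contains
a tree of height `d+1`, with elements chosen among the ladder via injective index maps. -/
theorem ladder_to_tree {X Y : Type*} [Fintype X] [Fintype Y]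
    (E : Set (X × Y)) (d : ℕ) (hd : 1 ≤ d)
    (a : Fin (2 ^ (d + 1)) → X) (b : Fin (2 ^ (d + 1)) → Y)
    (hlad : ∀ i j, (a i, b j) ∈ E ↔ i ≤ j) :
    ∃ f : (Fin (d + 1) → Bool) → Fin (2 ^ (d + 1)),
      ∃ g : ((i : Fin (d + 1)) × (Fin i.val → Bool)) → Fin (2 ^ (d + 1)),
        Function.Injective f ∧ Function.Injective g ∧
          ∀ (σ : Fin (d + 1) → Bool) (i : Fin (d + 1)),
            (a (f σ), b (g ⟨i, fun j => σ ⟨j.1, j.2.trans i.2⟩⟩)) ∈ E ↔ σ i = true := by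
  classical
  set cf : (Fin (d + 1) → Bool) → ℕ → Bool :=
    fun σ k => !σ ⟨d - k, by omega⟩ with hcf
  set cg : ((i : Fin (d + 1)) × (Fin i.val → Bool)) → ℕ → Bool :=
    fun x k => if h : d - k < (x.1 : ℕ) then !x.2 ⟨d - k, h⟩
      else decide ((x.1 : ℕ) < d - k) with hcg
  refine ⟨fun σ => ⟨∑ j ∈ Finset.range (d + 1), (cf σ j).toNat * 2 ^ j,
      sum_bits_lt _ _⟩,
    fun x => ⟨∑ j ∈ Finset.range (d + 1), (cg x j).toNat * 2 ^ j,
      sum_bits_lt _ _⟩, ?_, ?_, ?_⟩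
  · -- injectivity of f
    intro σ σ' h
    simp only [Fin.mk.injEq] at h
    have hb := sum_bits_inj _ _ _ h
    funext j
    have hj : d - ((d : ℕ) - (j : ℕ)) = (j : ℕ) := by omega
    have := hb (d - (j : ℕ)) (by omega)
    simp only [hcf] at this
    have e1 : (⟨d - (d - (j : ℕ)), by omega⟩ : Fin (d + 1)) = j := Fin.ext hj
    rw [e1] at this
    exact Bool.not_inj this
  · -- injectivity of g
    rintro ⟨i, τ⟩ ⟨i', τ'⟩ h
    simp only [Fin.mk.injEq] at h
    have hb := sum_bits_inj _ _ _ h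
    have key : ∀ j : ℕ, j ≤ d →
        (if h : j < (i : ℕ) then !τ ⟨j, h⟩ else decide ((i : ℕ) < j))
          = (if h : j < (i' : ℕ) then !τ' ⟨j, h⟩ else decide ((i' : ℕ) < j)) := by
      intro j hj
      have := hb (d - j) (by omega)
      simp only [hcg] at this
      have hj' : d - (d - j) = j := by omega
      rw [hj'] at this
      exact this
    have hii' : i = i' := by
      rcases lt_trichotomy (i : ℕ) (i' : ℕ) with h1 | h1 | h1
      · exfalso
        have := key (i' : ℕ) (by omega)
        rw [dif_neg (by omega), dif_neg (by omega)] at this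
        simp [h1] at this
      · exact Fin.ext h1
      · exfalso
        have := key (i : ℕ) (by omega)
        rw [dif_neg (by omega), dif_neg (by omega)] at this
        simp [h1] at this
    subst hii'
    have hττ' : τ = τ' := by
      funext j
      have := key (j : ℕ) (by omega)
      rw [dif_pos j.2, dif_pos j.2] at this
      have e1 : (⟨(j : ℕ), j.2⟩ : Fin (i : ℕ)) = j := rfl
      rw [e1] at this
      exact Bool.not_inj this
    rw [hττ']
  · -- tree property
    intro σ i
    rw [hlad]
    rw [Fin.mk_le_mk]
    set τ : Fin (i : ℕ) → Bool := fun j => σ ⟨j.1, j.2.trans i.2⟩ with hτ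
    have := sum_bits_le_iff (cf σ) (cg ⟨i, τ⟩) d (d - (i : ℕ)) (by omega)
      (by -- hhigh
        intro k hk1 hk2
        have hik : d - k < (i : ℕ) := by omega
        simp only [hcf, hcg, dif_pos hik, hτ])
      (by -- hcp
        simp only [hcg]
        have h1 : d - (d - (i : ℕ)) = (i : ℕ) := by
          have := i.2; omega
        rw [h1, dif_neg (by omega)]
        simp)
      (by -- hlow
        intro k hk
        have h1 : (i : ℕ) < d - k := by
          have := i.2; omega
        simp only [hcg]
        rw [dif_neg (by omega)]
        simp [h1])
    rw [this]
    have h1 : d - (d - (i : ℕ)) = (i : ℕ) := by have := i.2; omega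
    simp only [hcf]
    have e1 : (⟨d - (d - (i : ℕ)), by omega⟩ : Fin (d + 1)) = i := Fin.ext h1
    rw [e1]
    try simp
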